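/- Assume the lower-tail PRW inequality as a hypothesis (for i.i.d. $L_i \in [0,1]$ with mean $R \in (0,1)$ and integer $k \in [0, nR)$: $\mathbb{P}(\sum_i L_i \leq k) \leq \frac{R(n-k)}{nR-k}\mathbb{P}(\mathrm{Bin}(n,R) \leq k)$). Let $\alpha \in (0,1)$ and define the statistic $P = g\big(\min\{\hat R, \tfrac{\gamma(\alpha)-1}{n}\}; \alpha\big)$ where $\hat R = \tfrac1n \sum_i L_i$. Then $P$ is a valid p-value for $H_0: R > \alpha$, i.e., whenever $R > \alpha$, for every $\delta \in (0,1)$, $\mathbb{P}(P \leq \delta) \leq \delta$. -/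

import Mathlib

open MeasureTheory ProbabilityTheory Finset

/-- CDF of a Binomial(n,R) at k: P(Bin(n,R) ≤ k). -/
noncomputable def binCDF (n k : ℕ) (R : ℝ) : ℝ :=
  ∑ j ∈ Finset.range (k + 1), (n.choose j : ℝ) * R ^ j * (1 - R) ^ (n - j)

/-- Upper tail of a Binomial(n,p) at t: P(Bin(n,p) ≥ t). -/
noncomputable def binTail (n t : ℕ) (p : ℝ) : ℝ :=
  ∑ j ∈ Finset.Icc t n, (n.choose j : ℝ) * p ^ j * (1 - p) ^ (n - j)

/-- γ(R) = min {r ∈ ℕ : r ≥ n R}. -/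
noncomputable def gam (n : ℕ) (R : ℝ) : ℕ := sInf {r : ℕ | (n : ℝ) * R ≤ r}

/-- The function g(t; R) from the paper. -/
noncomputable def g (n : ℕ) (R t : ℝ) : ℝ :=
  if t = ((gam n R : ℝ) - 1) / n then
    max 1 (R * ((n : ℝ) - ((gam n R : ℝ) - 1)) / ((n : ℝ) * R - ((gam n R : ℝ) - 1)) *
      binCDF n (gam n R - 1) R)
  else
    R * ((n : ℝ) - (⌈(n : ℝ) * t⌉ : ℝ)) / ((n : ℝ) * R - (⌈(n : ℝ) * t⌉ : ℝ)) *
      binCDF n (⌈(n : ℝ) * t⌉).toNat R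


lemma term_hasDerivAt (n j : ℕ) (p : ℝ) :
    HasDerivAt (fun q : ℝ => (n.choose j : ℝ) * q ^ j * (1 - q) ^ (n - j))
      ((n.choose j : ℝ) * (j * p ^ (j - 1)) * (1 - p) ^ (n - j)
        - (n.choose j : ℝ) * ((n - j : ℕ) : ℝ) * p ^ j * (1 - p) ^ (n - j - 1)) p := by
  have h1 : HasDerivAt (fun q : ℝ => q ^ j) ((j : ℝ) * p ^ (j - 1)) p := hasDerivAt_pow j p
  have hs : HasDerivAt (fun q : ℝ => 1 - q) (-1 : ℝ) p := (hasDerivAt_id p).const_sub 1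
  have h2 : HasDerivAt (fun q : ℝ => (1 - q) ^ (n - j))
      ((((n - j : ℕ) : ℝ) * (1 - p) ^ (n - j - 1)) * (-1)) p :=
    (hasDerivAt_pow (n - j) (1 - p)).comp p hs
  have h := (h1.const_mul ((n.choose j : ℝ))).fun_mul h2
  refine h.congr_deriv ?_
  ring

lemma tele (n : ℕ) (p : ℝ) : ∀ k, k < n →
    ∑ j ∈ range (k + 1),
      ((n.choose j : ℝ) * (j * p ^ (j - 1)) * (1 - p) ^ (n - j)
        - (n.choose j : ℝ) * ((n - j : ℕ) : ℝ) * p ^ j * (1 - p) ^ (n - j - 1))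
      = -((n : ℝ) * ((n - 1).choose k : ℝ) * p ^ k * (1 - p) ^ (n - 1 - k)) := by
  intro k
  induction k with
  | zero =>
    intro hk
    simp [Nat.sub_zero]
  | succ k ih =>
    intro hk
    rw [Finset.sum_range_succ, ih (by omega)]
    have e1 : n - (k + 1) = n - 1 - k := by omega
    have e2 : n - 1 - k - 1 = n - 1 - (k + 1) := by omega
    have e3 : k + 1 - 1 = k := by omega
    rw [e1, e2, e3]
    have hn1 : n - 1 + 1 = n := by omega
    have hB1 : n * (n - 1).choose k = n.choose (k + 1) * (k + 1) := by
      have := Nat.add_one_mul_choose_eq (n - 1) k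
      simpa [Nat.succ_eq_add_one, hn1] using this
    have I1 : (n.choose (k + 1) : ℝ) * ((k : ℝ) + 1) = (n : ℝ) * ((n - 1).choose k : ℝ) := by
      push_cast
      exact_mod_cast hB1.symm
    have I2 : (n.choose (k + 1) : ℝ) * ((n - 1 - k : ℕ) : ℝ)
        = (n : ℝ) * ((n - 1).choose (k + 1) : ℝ) := by
      have hA : n.choose (k + 2) * (k + 2) = n.choose (k + 1) * (n - (k + 1)) :=
        Nat.choose_succ_right_eq n (k + 1)
      have hB2 : n * (n - 1).choose (k + 1) = n.choose (k + 2) * (k + 2) := by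
        have := Nat.add_one_mul_choose_eq (n - 1) (k + 1)
        simpa [Nat.succ_eq_add_one, hn1] using this
      have h3 : n.choose (k + 1) * (n - 1 - k) = n * (n - 1).choose (k + 1) := by
        have e : n - 1 - k = n - (k + 1) := by omega
        rw [e, ← hA, hB2]
      exact_mod_cast h3
    push_cast at I1 I2 ⊢
    linear_combination (p ^ k * (1 - p) ^ (n - 1 - k)) * I1
      - (p ^ (k + 1) * (1 - p) ^ (n - 1 - (k + 1))) * I2

lemma binCDF_hasDerivAt (n k : ℕ) (hk : k < n) (p : ℝ) :
    HasDerivAt (fun q => binCDF n k q)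
      (-((n : ℝ) * ((n - 1).choose k : ℝ) * p ^ k * (1 - p) ^ (n - 1 - k))) p := by
  have hsum : HasDerivAt (fun q => binCDF n k q)
      (∑ j ∈ range (k + 1),
        ((n.choose j : ℝ) * (j * p ^ (j - 1)) * (1 - p) ^ (n - j)
          - (n.choose j : ℝ) * ((n - j : ℕ) : ℝ) * p ^ j * (1 - p) ^ (n - j - 1))) p := by
    unfold binCDF
    exact HasDerivAt.fun_sum fun j _ => term_hasDerivAt n j p
  rw [← tele n p k hk]
  exact hsum

lemma binCDF_anti (n k : ℕ) (hk : k < n) : AntitoneOn (fun p => binCDF n k p) (Set.Icc 0 1) := by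
  apply antitoneOn_of_deriv_nonpos (convex_Icc 0 1)
  · exact fun x _ => ((binCDF_hasDerivAt n k hk x).continuousAt).continuousWithinAt
  · intro x hx
    exact (binCDF_hasDerivAt n k hk x).differentiableAt.differentiableWithinAt
  · intro x hx
    rw [interior_Icc] at hx
    rw [(binCDF_hasDerivAt n k hk x).deriv]
    have h1 : (0:ℝ) ≤ x ^ k := pow_nonneg hx.1.le k
    have h2 : (0:ℝ) ≤ (1 - x) ^ (n - 1 - k) := pow_nonneg (by linarith [hx.2]) _
    have h3 : (0:ℝ) ≤ (n : ℝ) * ((n - 1).choose k : ℝ) :=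
      mul_nonneg (Nat.cast_nonneg _) (Nat.cast_nonneg _)
    have := mul_nonneg (mul_nonneg h3 h1) h2
    linarith

lemma binCDF_le (n k : ℕ) (hk : k < n) {a b : ℝ} (ha : 0 ≤ a) (hab : a ≤ b) (hb : b ≤ 1) :
    binCDF n k b ≤ binCDF n k a :=
  binCDF_anti n k hk ⟨ha, hab.trans hb⟩ ⟨ha.trans hab, hb⟩ hab

lemma binCDF_nonneg (n k : ℕ) {p : ℝ} (h0 : 0 ≤ p) (h1 : p ≤ 1) : 0 ≤ binCDF n k p := by
  apply Finset.sum_nonneg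
  intro j _
  exact mul_nonneg (mul_nonneg (Nat.cast_nonneg _) (pow_nonneg h0 _))
    (pow_nonneg (by linarith) _)

theorem stmt_14 {Ω : Type*} [MeasurableSpace Ω] (μ : Measure Ω) [IsProbabilityMeasure μ]
    (n : ℕ) (hn : 0 < n) (L : Fin n → Ω → ℝ) (R α : ℝ)
    (hmeas : ∀ i, Measurable (L i))
    (hindep : iIndepFun L μ)
    (hident : ∀ i j, IdentDistrib (L i) (L j) μ μ)
    (hbdd : ∀ i, ∀ᵐ ω ∂μ, L i ω ∈ Set.Icc (0 : ℝ) 1)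
    (hmean : ∀ i, ∫ ω, L i ω ∂μ = R) (hR0 : 0 < R) (hR1 : R < 1)
    (hα : α ∈ Set.Ioo (0 : ℝ) 1)
    (hPRW : ∀ k : ℕ, (k : ℝ) < n * R →
      (μ {ω | ∑ i, L i ω ≤ (k : ℝ)}).toReal ≤
        R * ((n : ℝ) - k) / ((n : ℝ) * R - k) * binCDF n k R)
    (hH0 : α < R) (δ : ℝ) (hδ : δ ∈ Set.Ioo (0 : ℝ) 1) :
    (μ {ω | g n α (min ((1 / n : ℝ) * ∑ i, L i ω) (((gam n α : ℝ) - 1) / n)) ≤ δ}).toReal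
      ≤ δ := by
  obtain ⟨hα0, hα1⟩ := hα
  obtain ⟨hδ0, hδ1⟩ := hδ
  have hn0 : (0:ℝ) < n := Nat.cast_pos.mpr hn
  -- facts about gam
  have hγmem : (n:ℝ) * α ≤ (gam n α : ℝ) :=
    Nat.sInf_mem (⟨n, by show (n:ℝ) * α ≤ n; nlinarith⟩ :
      Set.Nonempty {r : ℕ | (n : ℝ) * α ≤ r})
  have hγpos : 1 ≤ gam n α := by
    rcases Nat.eq_zero_or_pos (gam n α) with h0 | h0
    · rw [h0] at hγmem
      norm_num at hγmem
      nlinarith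
    · exact h0
  have hmcast : ((gam n α - 1 : ℕ) : ℝ) = (gam n α : ℝ) - 1 := by
    push_cast [hγpos]
    ring
  have hmlt : ((gam n α - 1 : ℕ) : ℝ) < (n:ℝ) * α := by
    by_contra hcon
    push_neg at hcon
    have : gam n α ≤ gam n α - 1 := Nat.sInf_le hcon
    omega
  set m : ℕ := gam n α - 1 with hmdef
  -- the p-value function on the lattice
  set h : ℕ → ℝ := fun k => α * ((n:ℝ) - k) / ((n:ℝ) * α - k) * binCDF n k α with hh
  set K : Finset ℕ := (Finset.range (m + 1)).filter (fun k => h k ≤ δ) with hKdef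
  set B : Set Ω := {ω | ¬ ∀ i, L i ω ∈ Set.Icc (0:ℝ) 1} with hBdef
  have hB : μ B = 0 := by
    have hae : ∀ᵐ ω ∂μ, ∀ i, L i ω ∈ Set.Icc (0:ℝ) 1 := ae_all_iff.mpr hbdd
    exact hae
  -- key pointwise claim
  have key : ∀ ω : Ω, (∀ i, L i ω ∈ Set.Icc (0:ℝ) 1) →
      g n α (min ((1 / n : ℝ) * ∑ i, L i ω) (((gam n α : ℝ) - 1) / n)) ≤ δ →
      ∃ c ∈ K, (∑ i, L i ω) ≤ (c : ℝ) := by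
    intro ω hω hg
    set S : ℝ := ∑ i, L i ω with hSdef
    have hS0 : 0 ≤ S := Finset.sum_nonneg fun i _ => (hω i).1
    by_cases hcase : ((gam n α : ℝ) - 1) / n ≤ (1 / n : ℝ) * S
    · rw [min_eq_right hcase] at hg
      simp only [g, if_pos rfl] at hg
      have h1 := (le_max_left (1:ℝ)
        (α * ((n : ℝ) - ((gam n α : ℝ) - 1)) / ((n : ℝ) * α - ((gam n α : ℝ) - 1)) *
          binCDF n (gam n α - 1) α)).trans hg
      linarith
    · push_neg at hcase
      rw [min_eq_left hcase.le] at hg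
      have hne : (1 / n : ℝ) * S ≠ ((gam n α : ℝ) - 1) / n := ne_of_lt hcase
      simp only [g, if_neg hne] at hg
      have hnt : (n:ℝ) * ((1 / n : ℝ) * S) = S := by
        field_simp
      rw [hnt] at hg
      have hSm : S < (m : ℝ) := by
        have h5 := mul_lt_mul_of_pos_left hcase hn0
        rw [hnt] at h5
        have h6 : (n:ℝ) * (((gam n α : ℝ) - 1) / n) = (gam n α : ℝ) - 1 := by
          field_simp
        rw [h6, ← hmcast] at h5
        exact h5
      have hceil0 : (0:ℤ) ≤ ⌈S⌉ := Int.ceil_nonneg hS0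
      set c : ℕ := (⌈S⌉).toNat with hcdef
      have hccast : ((⌈S⌉ : ℤ) : ℝ) = (c : ℝ) := by
        rw [hcdef]
        exact_mod_cast (Int.toNat_of_nonneg hceil0).symm
      have hcm : c ≤ m := by
        have h7 : ⌈S⌉ ≤ (m : ℤ) := Int.ceil_le.mpr (by exact_mod_cast hSm.le)
        omega
      have hSc : S ≤ (c : ℝ) := by
        rw [← hccast]; exact Int.le_ceil S
      refine ⟨c, ?_, hSc⟩
      rw [hKdef]
      simp only [Finset.mem_filter, Finset.mem_range]
      refine ⟨by omega, ?_⟩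
      rw [hh]
      rw [hccast] at hg
      exact hg
  by_cases hKne : K.Nonempty
  · -- nonempty: bound via the maximum element
    obtain ⟨k, hkK, hkmax⟩ : ∃ k ∈ K, ∀ c ∈ K, c ≤ k :=
      ⟨K.max' hKne, K.max'_mem hKne, fun c hc => K.le_max' c hc⟩
    rw [hKdef] at hkK
    simp only [Finset.mem_filter, Finset.mem_range] at hkK
    have hkm : (k : ℝ) ≤ (m : ℝ) := by
      exact_mod_cast Nat.lt_succ_iff.mp hkK.1
    have hknα : (k:ℝ) < (n:ℝ) * α := lt_of_le_of_lt hkm hmlt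
    have hknR : (k:ℝ) < (n:ℝ) * R := by nlinarith
    have hkn : (k:ℝ) < (n:ℝ) := by nlinarith
    have hsub : {ω | g n α (min ((1 / n : ℝ) * ∑ i, L i ω) (((gam n α : ℝ) - 1) / n)) ≤ δ}
        ⊆ {ω | ∑ i, L i ω ≤ (k : ℝ)} ∪ B := by
      intro ω hω
      by_cases hgood : ∀ i, L i ω ∈ Set.Icc (0:ℝ) 1
      · left
        obtain ⟨c, hcK, hSc⟩ := key ω hgood hω
        have hck : c ≤ k := hkmax c hcK
        exact hSc.trans (by exact_mod_cast hck)
      · right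
        exact hgood
    have h1 : μ {ω | g n α (min ((1 / n : ℝ) * ∑ i, L i ω) (((gam n α : ℝ) - 1) / n)) ≤ δ}
        ≤ μ {ω | ∑ i, L i ω ≤ (k : ℝ)} := by
      calc μ _ ≤ μ ({ω | ∑ i, L i ω ≤ (k : ℝ)} ∪ B) := measure_mono hsub
        _ ≤ μ {ω | ∑ i, L i ω ≤ (k : ℝ)} + μ B := measure_union_le _ _
        _ = μ {ω | ∑ i, L i ω ≤ (k : ℝ)} := by rw [hB, add_zero]
    have h3 := ENNReal.toReal_mono (measure_ne_top μ _) h1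
    refine h3.trans ((hPRW k hknR).trans ?_)
    have hdR : (0:ℝ) < (n:ℝ) * R - k := by linarith
    have hdα : (0:ℝ) < (n:ℝ) * α - k := by linarith
    have hbmono : binCDF n k R ≤ binCDF n k α :=
      binCDF_le n k (by exact_mod_cast hkn) hα0.le hH0.le hR1.le
    have hbnn : 0 ≤ binCDF n k R := binCDF_nonneg n k hR0.le hR1.le
    have hpre : R * ((n:ℝ) - k) / ((n:ℝ) * R - k) ≤ α * ((n:ℝ) - k) / ((n:ℝ) * α - k) := by
      rw [div_le_div_iff₀ hdR hdα]
      nlinarith [mul_nonneg (mul_nonneg (sub_nonneg.mpr hkn.le)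
        (Nat.cast_nonneg k : (0:ℝ) ≤ (k:ℝ))) (sub_nonneg.mpr hH0.le)]
    have hprenn : 0 ≤ R * ((n:ℝ) - k) / ((n:ℝ) * R - k) :=
      div_nonneg (mul_nonneg hR0.le (by linarith)) hdR.le
    have hfinal : R * ((n:ℝ) - k) / ((n:ℝ) * R - k) * binCDF n k R
        ≤ α * ((n:ℝ) - k) / ((n:ℝ) * α - k) * binCDF n k α :=
      mul_le_mul hpre hbmono hbnn (hprenn.trans hpre)
    exact hfinal.trans hkK.2
  · -- empty: the event is contained in the null set B
    have hsub : {ω | g n α (min ((1 / n : ℝ) * ∑ i, L i ω) (((gam n α : ℝ) - 1) / n)) ≤ δ}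
        ⊆ B := by
      intro ω hω
      by_contra hωB
      have hgood : ∀ i, L i ω ∈ Set.Icc (0:ℝ) 1 := by
        rw [hBdef] at hωB
        simpa using hωB
      obtain ⟨c, hcK, _⟩ := key ω hgood hω
      exact hKne ⟨c, hcK⟩
    have h1 : μ {ω | g n α (min ((1 / n : ℝ) * ∑ i, L i ω) (((gam n α : ℝ) - 1) / n)) ≤ δ} = 0 :=
      le_antisymm ((measure_mono hsub).trans_eq hB) zero_le
    rw [h1]
    simpa using hδ0.le
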